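/- For every λ ≥ 0 and all x, y, z ∈ ℤ^d, the self-avoiding walk two-point function satisfies (as an inequality in [0,∞]): G^SAW_λ(x,z)·G^SAW_λ(z,y) ≤ (Σ_{τ∈ℤ^d} G^SAW_λ(0,τ)²)·G^SAW_λ(x,y). -/

import Mathlib

open Filter Topology

noncomputable section

/-- The canonical embedding of `ℤ^d` into `ℝ^d`. -/
def ic {d : ℕ} (y : Fin d → ℤ) : Fin d → ℝ := fun i => (y i : ℝ)

/-- `nrm` is a norm on `ℝ^d` invariant under the symmetries of `ℤ^d`
(coordinate permutations and sign flips). -/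
structure IsLatticeNorm (d : ℕ) (nrm : (Fin d → ℝ) → ℝ) : Prop where
  eq_zero : ∀ x : Fin d → ℝ, nrm x = 0 ↔ x = 0
  smul : ∀ (a : ℝ) (x : Fin d → ℝ), nrm (a • x) = |a| * nrm x
  add_le : ∀ x y : Fin d → ℝ, nrm (x + y) ≤ nrm x + nrm y
  symm : ∀ (π : Equiv.Perm (Fin d)) (ε : Fin d → ℝ), (∀ i, ε i = 1 ∨ ε i = -1) →
      ∀ x : Fin d → ℝ, nrm (fun i => ε i * x (π i)) = nrm x

/-- `ψ` is a positive, lattice-symmetric, sub-exponential prefactor on `ℤ^d \ {0}`. -/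
structure IsPrefactor (d : ℕ) (nrm : (Fin d → ℝ) → ℝ) (ψ : (Fin d → ℤ) → ℝ) : Prop where
  pos : ∀ y : Fin d → ℤ, y ≠ 0 → 0 < ψ y
  symm : ∀ (π : Equiv.Perm (Fin d)) (ε : Fin d → ℤ), (∀ i, ε i = 1 ∨ ε i = -1) →
      ∀ y : Fin d → ℤ, ψ (fun i => ε i * y (π i)) = ψ y
  subexp : Filter.Tendsto (fun y : Fin d → ℤ => Real.log (ψ y) / nrm (ic y))
      Filter.cofinite (nhds 0)

/-- The coupling constants `J_y = ψ(y) e^{-|y|}` for `y ≠ 0`, and `J_0 = 0`. -/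
def Jw {d : ℕ} (nrm : (Fin d → ℝ) → ℝ) (ψ : (Fin d → ℤ) → ℝ) (y : Fin d → ℤ) : ℝ :=
  if y = 0 then 0 else ψ y * Real.exp (-(nrm (ic y)))

/-- The killed random walk two-point function
`G^KRW_λ(x,y) = Σ_{k≥0} Σ_{y_1,…,y_k ≠ 0 : y_1+⋯+y_k = y-x} Π_i λ J_{y_i}`,
with values in `[0,∞]`; walks are encoded by their lists of nonzero steps. -/
def KRW {d : ℕ} (lam : ℝ) (J : (Fin d → ℤ) → ℝ) (x y : Fin d → ℤ) : ENNReal :=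
  ∑' l : {l : List (Fin d → ℤ) // (∀ s ∈ l, s ≠ 0) ∧ l.sum = y - x},
    (l.1.map (fun s => ENNReal.ofReal (lam * J s))).prod

/-- `icl lam J x ν` expresses that the inverse correlation length
`-lim_n (1/n) log G^KRW_λ(0, n•x)` exists and equals `ν`. -/
def icl {d : ℕ} (lam : ℝ) (J : (Fin d → ℤ) → ℝ) (x : Fin d → ℤ) (ν : ℝ) : Prop :=
  Filter.Tendsto (fun n : ℕ => -(Real.log ((KRW lam J 0 ((n : ℤ) • x)).toReal) / (n : ℝ)))
    Filter.atTop (nhds ν)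

/-- Euclidean scalar product on `ℝ^d`. -/
def dotR {d : ℕ} (t y : Fin d → ℝ) : ℝ := ∑ i, t i * y i

/-- `t` is dual to `x`: `t·x = |x|` and `t·y ≤ |y|` for all `y`. -/
def IsDual {d : ℕ} (nrm : (Fin d → ℝ) → ℝ) (t x : Fin d → ℝ) : Prop :=
  dotR t x = nrm x ∧ ∀ y : Fin d → ℝ, dotR t y ≤ nrm y

/-- The surcharge function `𝔰_t(y) = |y| - t·y` of a dual vector `t`. -/
def scharge {d : ℕ} (nrm : (Fin d → ℝ) → ℝ) (t : Fin d → ℝ) (y : Fin d → ℤ) : ℝ :=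
  nrm (ic y) - dotR t (ic y)

end

/-- The self-avoiding walk two-point function
`G^SAW_λ(x,y) = Σ_{γ ∈ SAW(x,y)} Π_i λ J_{γ_{i-1}γ_i}`, with values in `[0,∞]`;
a SAW from `x` to `y` is encoded by the list of its vertices after `x`. -/
noncomputable def SAWtpf {d : ℕ} (lam : ℝ) (J : (Fin d → ℤ) → ℝ)
    (x y : Fin d → ℤ) : ENNReal :=
  ∑' p : {p : List (Fin d → ℤ) //
      (x :: p).Nodup ∧ (x :: p).getLast (List.cons_ne_nil x p) = y},
    (((x :: p.1).zip p.1).map (fun q => ENNReal.ofReal (lam * J (q.2 - q.1)))).prod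

open List
noncomputable def Wt {α : Type*} [AddCommGroup α] (f : α → ENNReal) (L : List α) : ENNReal :=
  ((L.zip L.tail).map (fun q => f (q.2 - q.1))).prod

variable {α : Type*} [AddCommGroup α]

@[simp] lemma Wt_nil (f : α → ENNReal) : Wt f ([] : List α) = 1 := rfl
@[simp] lemma Wt_single (f : α → ENNReal) (a : α) : Wt f [a] = 1 := rfl
@[simp] lemma Wt_cons_cons (f : α → ENNReal) (a b : α) (L : List α) :
    Wt f (a :: b :: L) = f (b - a) * Wt f (b :: L) := rfl

lemma Wt_split (f : α → ENNReal) : ∀ (U : List α) (v : α) (T : List α),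
    Wt f (U ++ v :: T) = Wt f (U ++ [v]) * Wt f (v :: T)
  | [], v, T => by simp
  | [a], v, T => by simp
  | a :: b :: U, v, T => by
    have IH := Wt_split f (b :: U) v T
    simp only [cons_append, Wt_cons_cons] at *
    rw [IH]; ring

lemma Wt_reverse (f : α → ENNReal) (hf : ∀ v : α, f (-v) = f v) :
    ∀ (L : List α), Wt f L.reverse = Wt f L
  | [] => by simp
  | [a] => by simp
  | a :: b :: L => by
    have IH := Wt_reverse f hf (b :: L)
    have h1 : (a :: b :: L).reverse = L.reverse ++ [b] ++ [a] := by simp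
    have h2 : (b :: L).reverse = L.reverse ++ [b] := by simp
    rw [h1, append_assoc]
    show Wt f (L.reverse ++ b :: [a]) = _
    rw [Wt_split f L.reverse b [a]]
    rw [← h2, IH]
    have : f (a - b) = f (b - a) := by rw [← hf (b - a), neg_sub]
    simp [this]; ring

lemma Wt_map_sub (f : α → ENNReal) (z : α) :
    ∀ (L : List α), Wt f (L.map (fun v => v - z)) = Wt f L
  | [] => by simp
  | [a] => by simp
  | a :: b :: L => by
    have IH := Wt_map_sub f z (b :: L)
    simp only [map_cons] at *
    rw [Wt_cons_cons, Wt_cons_cons, IH, sub_sub_sub_cancel_right]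
open List

section
variable {α : Type*}

lemma dropWhile_head_false (p : α → Bool) :
    ∀ {l : List α} {a : α} {t : List α}, l.dropWhile p = a :: t → p a = false := by
  intro l
  induction l with
  | nil => intro a t h; simp [List.dropWhile] at h
  | cons b l ih =>
    intro a t h
    rw [List.dropWhile_cons] at h
    split at h
    · exact ih h
    · next hb => injection h with h1 _; subst h1; simpa using hb

lemma takeWhile_middle (p : α → Bool) (w : α) (hw : p w = false) :
    ∀ (A D : List α), (∀ a ∈ A, p a = true) →
      (A ++ w :: D).takeWhile p = A ∧ (A ++ w :: D).dropWhile p = w :: D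
  | [], D, _ => by simp [List.takeWhile_cons, List.dropWhile_cons, hw]
  | a :: A, D, h => by
    have hA := takeWhile_middle p w hw A D (fun b hb => h b (mem_cons_of_mem _ hb))
    have ha : p a = true := h a mem_cons_self
    simp [List.takeWhile_cons, List.dropWhile_cons, ha, hA.1, hA.2]

lemma cons_of_append_cons {A : List α} {w x : α} {D r : List α} (h : A ++ w :: D = x :: r)
    (D' : List α) : A ++ w :: D' = x :: (A ++ w :: D').tail := by
  cases A with
  | nil => injection h with h1 _; subst h1; rfl
  | cons a A => injection h with h1 _; subst h1; rfl

lemma getLast_eq_iff' {l : List α} (h : l ≠ []) {b : α} :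
    l.getLast h = b ↔ l.getLast? = some b := by
  rw [List.getLast?_eq_getLast h]; simp

end

section
variable {V : Type*} [AddCommGroup V] [DecidableEq V] [Inhabited V]

/-- The surgery map. -/
def PhiS (x z : V) (p q : List V) : V × List V × List V × List V :=
  let L2 := z :: q
  let R := (x :: p).dropWhile (fun v => !decide (v ∈ L2))
  let w := R.head!
  let A := (x :: p).takeWhile (fun v => !decide (v ∈ L2))
  let C := L2.takeWhile (fun v => !decide (v = w))
  let D := (L2.dropWhile (fun v => !decide (v = w))).tail
  (w - z, ((w :: R.tail).reverse.map (fun v => v - z)).tail,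
    ((C ++ [w]).map (fun v => v - z)).tail, (A ++ w :: D).tail)

lemma PhiS_split (x z : V) (p q : List V)
    (h1l : (x :: p).getLast (cons_ne_nil x p) = z) :
    ∃ (A : List V) (w : V) (B C D : List V),
      x :: p = A ++ w :: B ∧ z :: q = C ++ w :: D ∧
      (∀ a ∈ A, a ∉ z :: q) ∧ w ∈ z :: q ∧ (∀ a ∈ C, a ≠ w) ∧
      PhiS x z p q = (w - z, ((w :: B).reverse.map (fun v => v - z)).tail,
        ((C ++ [w]).map (fun v => v - z)).tail, (A ++ w :: D).tail) := by
  have hzL1 : z ∈ x :: p := h1l ▸ List.getLast_mem _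
  have hTD := List.takeWhile_append_dropWhile
    (p := fun v => !decide (v ∈ z :: q)) (l := x :: p)
  have hRne : (x :: p).dropWhile (fun v => !decide (v ∈ z :: q)) ≠ [] := by
    intro h0
    have hxp : x :: p = (x :: p).takeWhile (fun v => !decide (v ∈ z :: q)) := by
      conv_lhs => rw [← hTD]
      rw [h0, append_nil]
    have := List.mem_takeWhile_imp (hxp ▸ hzL1)
    simp at this
  set R := (x :: p).dropWhile (fun v => !decide (v ∈ z :: q)) with hRdef
  have hRwB : R = R.head! :: R.tail := (List.cons_head!_tail hRne).symm
  set w := R.head! with hwdef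
  have hL1 : x :: p = (x :: p).takeWhile (fun v => !decide (v ∈ z :: q)) ++ w :: R.tail := by
    conv_lhs => rw [← hTD]
    rw [← hRwB]
  have hwmem : w ∈ z :: q := by
    have := dropWhile_head_false (fun v => !decide (v ∈ z :: q)) (l := x :: p)
      (hRdef ▸ hRwB : (x :: p).dropWhile _ = w :: R.tail)
    simp at this
    exact (List.mem_cons).mpr (or_iff_not_imp_left.mpr this)
  have hA : ∀ a ∈ (x :: p).takeWhile (fun v => !decide (v ∈ z :: q)), a ∉ z :: q := by
    intro a ha
    have := List.mem_takeWhile_imp ha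
    simpa using this
  -- second split
  have hTD2 := List.takeWhile_append_dropWhile (p := fun v => !decide (v = w)) (l := z :: q)
  have hDwne : (z :: q).dropWhile (fun v => !decide (v = w)) ≠ [] := by
    intro h0
    have hzq : z :: q = (z :: q).takeWhile (fun v => !decide (v = w)) := by
      conv_lhs => rw [← hTD2]
      rw [h0, append_nil]
    have := List.mem_takeWhile_imp (hzq ▸ hwmem)
    simpa using this
  set Dw := (z :: q).dropWhile (fun v => !decide (v = w)) with hDwdef
  have hDwcons : Dw = Dw.head! :: Dw.tail := (List.cons_head!_tail hDwne).symm
  have hhead : Dw.head! = w := by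
    have := dropWhile_head_false (fun v => !decide (v = w)) (l := z :: q)
      (hDwdef ▸ hDwcons : (z :: q).dropWhile _ = Dw.head! :: Dw.tail)
    simpa using this
  have hL2 : z :: q = (z :: q).takeWhile (fun v => !decide (v = w)) ++ w :: Dw.tail := by
    conv_lhs => rw [← hTD2]
    rw [← hhead, ← hDwcons]
  have hC : ∀ a ∈ (z :: q).takeWhile (fun v => !decide (v = w)), a ≠ w := by
    intro a ha
    have := List.mem_takeWhile_imp ha
    simpa using this
  exact ⟨_, w, R.tail, _, Dw.tail, hL1, hL2, hA, hwmem, hC, rfl⟩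

end

section
variable {V : Type*} [AddCommGroup V] [DecidableEq V] [Inhabited V]

lemma sub_inj (z : V) : Function.Injective (fun v : V => v - z) := by
  intro a b h
  simpa using congrArg (fun v => v + z) h

lemma PhiS_image {x z y : V} {p q : List V}
    (h1n : (x :: p).Nodup) (h1l : (x :: p).getLast (cons_ne_nil x p) = z)
    (h2n : (z :: q).Nodup) (h2l : (z :: q).getLast (cons_ne_nil z q) = y) :
    ∃ (τ : V) (b b' s : List V), PhiS x z p q = (τ, b, b', s) ∧
      ((0 : V) :: b).Nodup ∧ ((0 : V) :: b).getLast (cons_ne_nil 0 b) = τ ∧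
      ((0 : V) :: b').Nodup ∧ ((0 : V) :: b').getLast (cons_ne_nil 0 b') = τ ∧
      (x :: s).Nodup ∧ (x :: s).getLast (cons_ne_nil x s) = y ∧
      ∀ (f : V → ENNReal), (∀ v : V, f (-v) = f v) →
        Wt f ((0 : V) :: b) * Wt f ((0 : V) :: b') * Wt f (x :: s) =
          Wt f (x :: p) * Wt f (z :: q) := by
  obtain ⟨A, w, B, C, D, hL1, hL2, hA, hwmem, hC, hPhi⟩ := PhiS_split x z p q h1l
  -- basic sublist facts
  have hwB_sub : w :: B <+ x :: p := hL1 ▸ List.sublist_append_right A (w :: B)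
  have hA_sub : A <+ x :: p := hL1 ▸ List.sublist_append_left A (w :: B)
  have hCw_sub : C ++ [w] <+ z :: q := by
    rw [hL2]
    exact (List.cons_sublist_cons.mpr (nil_sublist D)).append_left C
  have hwD_sub : w :: D <+ z :: q := hL2 ▸ List.sublist_append_right C (w :: D)
  -- getLast? facts
  have hlast1 : (x :: p).getLast? = some z := by
    rw [← getLast_eq_iff' (cons_ne_nil x p)]; exact h1l
  have hlast2 : (z :: q).getLast? = some y := by
    rw [← getLast_eq_iff' (cons_ne_nil z q)]; exact h2l
  have hwB_last : (w :: B).getLast? = some z := by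
    rw [← List.getLast?_append_cons A w B, ← hL1]; exact hlast1
  -- the b component
  have hb : (w :: B).reverse.map (fun v => v - z) =
      (0 : V) :: ((w :: B).reverse.map (fun v => v - z)).tail := by
    have h0 : ((w :: B).reverse.map (fun v => v - z)).head? = some 0 := by
      rw [List.head?_map, List.head?_reverse, hwB_last]
      simp
    exact (List.cons_head?_tail h0).symm
  -- the b' component
  have hCw_head : (C ++ [w]).head? = some z := by
    have h1 : (C ++ w :: D).head? = some z := by rw [← hL2]; rfl
    rw [List.head?_append] at h1 ⊢
    simpa using h1
  have hb' : (C ++ [w]).map (fun v => v - z) =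
      (0 : V) :: ((C ++ [w]).map (fun v => v - z)).tail := by
    have h0 : ((C ++ [w]).map (fun v => v - z)).head? = some 0 := by
      rw [List.head?_map, hCw_head]
      simp
    exact (List.cons_head?_tail h0).symm
  -- the s component
  have hs : A ++ w :: D = x :: (A ++ w :: D).tail := cons_of_append_cons hL1.symm D
  refine ⟨w - z, _, _, _, hPhi, ?_, ?_, ?_, ?_, ?_, ?_, ?_⟩
  · rw [← hb]
    exact ((nodup_reverse.mpr (h1n.sublist hwB_sub)).map (sub_inj z))
  · rw [getLast_eq_iff', ← hb, List.getLast?_map, List.getLast?_reverse]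
    rfl
  · rw [← hb']
    exact (h2n.sublist hCw_sub).map (sub_inj z)
  · rw [getLast_eq_iff', ← hb', List.getLast?_map, List.getLast?_concat]
    rfl
  · rw [← hs]
    refine (h1n.sublist hA_sub).append (h2n.sublist hwD_sub) ?_
    intro a haA hawD
    exact hA a haA (hwD_sub.subset hawD)
  · rw [getLast_eq_iff', ← hs, List.getLast?_append_cons,
      ← List.getLast?_append_cons C w D, ← hL2]
    exact hlast2
  · intro f hf
    have e1 : Wt f ((0 : V) :: ((w :: B).reverse.map (fun v => v - z)).tail) = Wt f (w :: B) := by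
      rw [← hb, Wt_map_sub, Wt_reverse f hf]
    have e2 : Wt f ((0 : V) :: ((C ++ [w]).map (fun v => v - z)).tail) = Wt f (C ++ [w]) := by
      rw [← hb', Wt_map_sub]
    have e3 : Wt f (x :: (A ++ w :: D).tail) = Wt f (A ++ [w]) * Wt f (w :: D) := by
      rw [← hs, Wt_split]
    rw [e1, e2, e3, hL1, hL2, Wt_split f A w B, Wt_split f C w D]
    ring

end

section
variable {V : Type*} [AddCommGroup V] [DecidableEq V] [Inhabited V]

lemma eq_of_head?_tail {β : Type*} {l1 l2 : List β} (h1 : l1.head? = l2.head?)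
    (h2 : l1.tail = l2.tail) : l1 = l2 := by
  cases l1 <;> cases l2 <;> simp_all

lemma PhiS_injective {x z : V} {p q p' q' : List V}
    (h1l : (x :: p).getLast (cons_ne_nil x p) = z)
    (h1l' : (x :: p').getLast (cons_ne_nil x p') = z)
    (h : PhiS x z p q = PhiS x z p' q') : p = p' ∧ q = q' := by
  obtain ⟨A, w, B, C, D, hL1, hL2, hA, hwmem, hC, hPhi⟩ := PhiS_split x z p q h1l
  obtain ⟨A', w', B', C', D', hL1', hL2', hA', hwmem', hC', hPhi'⟩ := PhiS_split x z p' q' h1l'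
  rw [hPhi, hPhi'] at h
  obtain ⟨hτ, hb, hb', hs⟩ : w - z = w' - z ∧
      ((w :: B).reverse.map (fun v => v - z)).tail =
        ((w' :: B').reverse.map (fun v => v - z)).tail ∧
      ((C ++ [w]).map (fun v => v - z)).tail =
        ((C' ++ [w']).map (fun v => v - z)).tail ∧
      (A ++ w :: D).tail = (A' ++ w' :: D').tail := by
    simpa [Prod.ext_iff] using h
  have hw : w = w' := by
    have := congrArg (fun v => v + z) hτ
    simpa using this
  subst hw
  -- recover w :: B from the b-component
  have hlast1 : (w :: B).getLast? = some z := by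
    rw [← List.getLast?_append_cons A w B, ← hL1, ← getLast_eq_iff' (cons_ne_nil x p)]
    exact h1l
  have hlast1' : (w :: B').getLast? = some z := by
    rw [← List.getLast?_append_cons A' w B', ← hL1', ← getLast_eq_iff' (cons_ne_nil x p')]
    exact h1l'
  have hbfull : (w :: B).reverse.map (fun v => v - z) =
      (w :: B').reverse.map (fun v => v - z) := by
    have e : ((w :: B).reverse.map (fun v => v - z)).head? =
        ((w :: B').reverse.map (fun v => v - z)).head? := by
      rw [List.head?_map, List.head?_map, List.head?_reverse, List.head?_reverse,
        hlast1, hlast1']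
    exact eq_of_head?_tail e hb
  have hB : B = B' := by
    have := (List.map_injective_iff.mpr (sub_inj z)) hbfull
    have := List.reverse_injective this
    injection this
  subst hB
  -- recover C from the b'-component
  have hCw_head : (C ++ [w]).head? = some z := by
    have h1 : (C ++ w :: D).head? = some z := by rw [← hL2]; rfl
    rw [List.head?_append] at h1 ⊢
    simpa using h1
  have hCw_head' : (C' ++ [w]).head? = some z := by
    have h1 : (C' ++ w :: D').head? = some z := by rw [← hL2']; rfl
    rw [List.head?_append] at h1 ⊢
    simpa using h1
  have hbfull' : (C ++ [w]).map (fun v => v - z) = (C' ++ [w]).map (fun v => v - z) := by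
    have e : ((C ++ [w]).map (fun v => v - z)).head? =
        ((C' ++ [w]).map (fun v => v - z)).head? := by
      rw [List.head?_map, List.head?_map, hCw_head, hCw_head']
    exact eq_of_head?_tail e hb'
  have hCeq : C = C' := by
    have := (List.map_injective_iff.mpr (sub_inj z)) hbfull'
    simpa using this
  subst hCeq
  -- recover A and D from the s-component
  have hsfull : A ++ w :: D = A' ++ w :: D' := by
    have e1 : A ++ w :: D = x :: (A ++ w :: D).tail := cons_of_append_cons hL1.symm D
    have e2 : A' ++ w :: D' = x :: (A' ++ w :: D').tail := cons_of_append_cons hL1'.symm D'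
    rw [e1, e2, hs]
  have htw := takeWhile_middle (fun v => !decide (v = w)) w (by simp) A D
    (fun a ha => by simpa using (fun hc : a = w => hA a ha (hc ▸ hwmem)))
  have htw' := takeWhile_middle (fun v => !decide (v = w)) w (by simp) A' D'
    (fun a ha => by simpa using (fun hc : a = w => hA' a ha (hc ▸ hwmem')))
  have hAeq : A = A' := by rw [← htw.1, ← htw'.1, hsfull]
  have hDeq : D = D' := by
    have := htw.2.symm.trans (hsfull ▸ htw'.2 : (A ++ w :: D).dropWhile _ = w :: D')
    injection this
  subst hAeq; subst hDeq
  constructor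
  · have : x :: p = x :: p' := hL1.trans hL1'.symm
    injection this
  · have : z :: q = z :: q' := hL2.trans hL2'.symm
    injection this

end

section
open ENNReal
variable {V : Type*} [AddCommGroup V] [DecidableEq V] [Inhabited V]

noncomputable def IndW (f : V → ENNReal) (a b : V) (l : List V) : ENNReal :=
  Set.indicator {l : List V | (a :: l).Nodup ∧ (a :: l).getLast (List.cons_ne_nil a l) = b}
    (fun l => Wt f (a :: l)) l

lemma tsum_subtype_Wt (f : V → ENNReal) (a b : V) :
    (∑' l : {l : List V // (a :: l).Nodup ∧ (a :: l).getLast (List.cons_ne_nil a l) = b},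
      Wt f (a :: l.1)) = ∑' l : List V, IndW f a b l :=
  tsum_subtype {l : List V | (a :: l).Nodup ∧ (a :: l).getLast (List.cons_ne_nil a l) = b}
    (fun l => Wt f (a :: l))

lemma IndW_of {f : V → ENNReal} {a b : V} {l : List V}
    (h : (a :: l).Nodup ∧ (a :: l).getLast (List.cons_ne_nil a l) = b) :
    IndW f a b l = Wt f (a :: l) := by
  have hm : l ∈ {l : List V | (a :: l).Nodup ∧ (a :: l).getLast (List.cons_ne_nil a l) = b} := h
  exact Set.indicator_of_mem hm _

theorem key_ineq (f : V → ENNReal) (hf : ∀ v : V, f (-v) = f v) (x y z : V) :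
    (∑' pl : {l : List V // (x :: l).Nodup ∧ (x :: l).getLast (List.cons_ne_nil x l) = z},
        Wt f (x :: pl.1)) *
      (∑' ql : {l : List V // (z :: l).Nodup ∧ (z :: l).getLast (List.cons_ne_nil z l) = y},
        Wt f (z :: ql.1)) ≤
    (∑' τ : V, (∑' bl : {l : List V // ((0 : V) :: l).Nodup ∧
        ((0 : V) :: l).getLast (List.cons_ne_nil 0 l) = τ}, Wt f (0 :: bl.1)) ^ 2) *
      (∑' sl : {l : List V // (x :: l).Nodup ∧ (x :: l).getLast (List.cons_ne_nil x l) = y},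
        Wt f (x :: sl.1)) := by
  classical
  set T1 := {l : List V // (x :: l).Nodup ∧ (x :: l).getLast (List.cons_ne_nil x l) = z}
  set T2 := {l : List V // (z :: l).Nodup ∧ (z :: l).getLast (List.cons_ne_nil z l) = y}
  set g : V × List V × List V × List V → ENNReal :=
    fun u => IndW f 0 u.1 u.2.1 * IndW f 0 u.1 u.2.2.1 * IndW f x y u.2.2.2 with hg
  have step1 : (∑' pl : T1, Wt f (x :: pl.1)) * (∑' ql : T2, Wt f (z :: ql.1)) =
      ∑' r : T1 × T2, Wt f (x :: r.1.1) * Wt f (z :: r.2.1) := by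
    rw [ENNReal.tsum_prod']
    rw [← ENNReal.tsum_mul_right]
    exact tsum_congr fun pl => ENNReal.tsum_mul_left.symm
  have step2 : ∀ r : T1 × T2,
      Wt f (x :: r.1.1) * Wt f (z :: r.2.1) ≤ g (PhiS x z r.1.1 r.2.1) := by
    intro r
    obtain ⟨τ, b, b', s, hPhi, n1, g1, n2, g2, n3, g3, hw⟩ :=
      PhiS_image (q := r.2.1) r.1.2.1 r.1.2.2 r.2.2.1 r.2.2.2
    rw [hPhi, hg]
    simp only
    rw [IndW_of ⟨n1, g1⟩, IndW_of ⟨n2, g2⟩, IndW_of ⟨n3, g3⟩, hw f hf]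
  have hinj : Function.Injective (fun r : T1 × T2 => PhiS x z r.1.1 r.2.1) := by
    intro r r' h
    obtain ⟨pe, qe⟩ := PhiS_injective r.1.2.2 r'.1.2.2 h
    exact Prod.ext (Subtype.ext pe) (Subtype.ext qe)
  have step3 : ∑' r : T1 × T2, g (PhiS x z r.1.1 r.2.1) ≤
      ∑' u : V × List V × List V × List V, g u :=
    tsum_comp_le_tsum_of_injective hinj g
  have step4 : (∑' u : V × List V × List V × List V, g u) =
      (∑' τ : V, (∑' bl : {l : List V // ((0 : V) :: l).Nodup ∧
        ((0 : V) :: l).getLast (List.cons_ne_nil 0 l) = τ}, Wt f (0 :: bl.1)) ^ 2) *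
      (∑' sl : {l : List V // (x :: l).Nodup ∧ (x :: l).getLast (List.cons_ne_nil x l) = y},
        Wt f (x :: sl.1)) := by
    rw [ENNReal.tsum_prod']
    have inner : ∀ τ : V, (∑' v : List V × List V × List V, g (τ, v)) =
        (∑' b : List V, IndW f 0 τ b) * (∑' b' : List V, IndW f 0 τ b') *
          (∑' s : List V, IndW f x y s) := by
      intro τ
      rw [ENNReal.tsum_prod']
      have e1 : ∀ b : List V, (∑' v2 : List V × List V, g (τ, b, v2)) =
          IndW f 0 τ b * (∑' b' : List V, IndW f 0 τ b') * (∑' s : List V, IndW f x y s) := by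
        intro b
        rw [ENNReal.tsum_prod']
        have e2 : ∀ b' : List V, (∑' s : List V, g (τ, b, b', s)) =
            IndW f 0 τ b * IndW f 0 τ b' * (∑' s : List V, IndW f x y s) := by
          intro b'
          rw [hg]
          simp only
          exact ENNReal.tsum_mul_left
        rw [tsum_congr e2, ENNReal.tsum_mul_right, ENNReal.tsum_mul_left]
      rw [tsum_congr e1, ENNReal.tsum_mul_right, ENNReal.tsum_mul_right]
    rw [tsum_congr inner]
    rw [← ENNReal.tsum_mul_right]
    refine tsum_congr fun τ => ?_
    rw [sq, tsum_subtype_Wt f 0 τ, tsum_subtype_Wt f x y]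
  calc (∑' pl : T1, Wt f (x :: pl.1)) * (∑' ql : T2, Wt f (z :: ql.1))
      = ∑' r : T1 × T2, Wt f (x :: r.1.1) * Wt f (z :: r.2.1) := step1
    _ ≤ ∑' r : T1 × T2, g (PhiS x z r.1.1 r.2.1) := ENNReal.tsum_le_tsum step2
    _ ≤ ∑' u : V × List V × List V × List V, g u := step3
    _ = _ := step4

end

/-- Submultiplicativity-type inequality for the SAW two-point
function: `G^SAW_λ(x,z) G^SAW_λ(z,y) ≤ (Σ_τ G^SAW_λ(0,τ)²) G^SAW_λ(x,y)`,
as an inequality in `[0,∞]`. -/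
theorem statement16 {d : ℕ} (hd : 1 ≤ d)
    (nrm : (Fin d → ℝ) → ℝ) (hnrm : IsLatticeNorm d nrm)
    (ψ : (Fin d → ℤ) → ℝ) (hψ : IsPrefactor d nrm ψ)
    (hJ1 : HasSum (fun y : Fin d → ℤ => Jw nrm ψ y) 1)
    (lam : ℝ) (hlam : 0 ≤ lam)
    (x y z : Fin d → ℤ) :
    SAWtpf lam (Jw nrm ψ) x z * SAWtpf lam (Jw nrm ψ) z y ≤
      (∑' τ : Fin d → ℤ, SAWtpf lam (Jw nrm ψ) 0 τ ^ 2) *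
        SAWtpf lam (Jw nrm ψ) x y := by
  have hf : ∀ v : Fin d → ℤ, (fun s => ENNReal.ofReal (lam * Jw nrm ψ s)) (-v) =
      (fun s => ENNReal.ofReal (lam * Jw nrm ψ s)) v := by
    intro v
    have h2 : ψ (-v) = ψ v := by
      have h := hψ.symm (Equiv.refl _) (fun _ => -1) (fun _ => Or.inr rfl) v
      have e : (fun i => (-1 : ℤ) * v ((Equiv.refl (Fin d)) i)) = -v := by
        funext i; simp
      rw [e] at h
      exact h
    have h3 : nrm (ic (-v)) = nrm (ic v) := by
      have h := hnrm.symm (Equiv.refl _) (fun _ => (-1 : ℝ)) (fun _ => Or.inr rfl) (ic v)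
      have e : (fun i => (-1 : ℝ) * (ic v) ((Equiv.refl (Fin d)) i)) = ic (-v) := by
        funext i; simp [ic]
      rw [e] at h
      exact h
    have hJ : Jw nrm ψ (-v) = Jw nrm ψ v := by
      unfold Jw
      by_cases hv : v = 0
      · simp [hv]
      · rw [if_neg (by simpa using hv), if_neg hv, h2, h3]
    simp only [hJ]
  exact key_ineq (fun s => ENNReal.ofReal (lam * Jw nrm ψ s)) hf x y z
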